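/- Let n be a positive integer and h : (0,∞) → (0,∞). (1) If for every positive definite Hermitian A ∈ M_{3n}(ℂ) and every T ∈ M_{3n}(ℂ) the conditions TᴴT ≤ I and TᴴAT ≤ A imply Tᴴh(A)T ≤ h(A), then h is matrix concave of order n: λ·h(A₁) + (1−λ)·h(A₂) ≤ h(λA₁ + (1−λ)A₂) for all λ ∈ [0,1] and all positive definite Hermitian A₁, A₂ ∈ Mₙ(ℂ). (2) If h is matrix concave of order n, then h is matrix monotone of order n: A₁ ≤ A₂ (positive definite Hermitian in Mₙ(ℂ)) implies h(A₁) ≤ h(A₂). -/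

import Mathlib

open Matrix MeasureTheory
open scoped ComplexOrder

/-- Loewner order on complex `n × n` matrices: `LoewnerLE A B` iff `B - A` is
positive semidefinite (i.e. `A ≤ B`). -/
def LoewnerLE {n : ℕ} (A B : Matrix (Fin n) (Fin n) ℂ) : Prop := (B - A).PosSemidef

/-- Functional calculus for Hermitian matrices: apply `h : ℝ → ℝ` to each eigenvalue
in a spectral decomposition of `A` (junk value `0` for non-Hermitian input). -/
noncomputable def matFunCalc {n : ℕ} (h : ℝ → ℝ) (A : Matrix (Fin n) (Fin n) ℂ) :
    Matrix (Fin n) (Fin n) ℂ :=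
  if hA : A.IsHermitian then
    (hA.eigenvectorUnitary : Matrix (Fin n) (Fin n) ℂ) *
      diagonal (fun i => (h (hA.eigenvalues i) : ℂ)) *
      star (hA.eigenvectorUnitary : Matrix (Fin n) (Fin n) ℂ)
  else 0


section Helpers
variable {m k : Type*} [Fintype m] [Fintype k] [DecidableEq m] [DecidableEq k]
set_option linter.unusedSectionVars false


lemma rsmul (r : ℝ) (M : Matrix m k ℂ) : r • M = (r : ℂ) • M := by
  ext i j; simp [Complex.real_smul]

lemma psd_smul {M : Matrix m m ℂ} (hM : M.PosSemidef) {r : ℝ} (hr : 0 ≤ r) :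
    ((r : ℂ) • M).PosSemidef := by
  rw [posSemidef_iff_dotProduct_mulVec]; constructor
  · show ((r:ℂ) • M)ᴴ = _
    rw [conjTranspose_smul, hM.1.eq]
    congr 1
    simp [Complex.star_def, Complex.conj_ofReal]
  · intro x
    rw [smul_mulVec, dotProduct_smul]
    have h0 : (0:ℂ) ≤ (r:ℂ) := by exact_mod_cast hr
    exact mul_nonneg h0 (hM.dotProduct_mulVec_nonneg x)

lemma blocks_quad (M : Matrix m m ℂ) (N : Matrix k k ℂ) (x : m ⊕ k → ℂ) :
    star x ⬝ᵥ (fromBlocks M 0 0 N) *ᵥ x =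
      star (x ∘ Sum.inl) ⬝ᵥ M *ᵥ (x ∘ Sum.inl) + star (x ∘ Sum.inr) ⬝ᵥ N *ᵥ (x ∘ Sum.inr) := by
  conv_lhs => rw [← Sum.elim_comp_inl_inr x]
  rw [fromBlocks_mulVec]
  simp only [Matrix.zero_mulVec, add_zero, zero_add]
  have hs : star (Sum.elim (x ∘ Sum.inl) (x ∘ Sum.inr)) =
      Sum.elim (star (x ∘ Sum.inl)) (star (x ∘ Sum.inr)) := by
    ext (i | i) <;> rfl
  rw [hs, sumElim_dotProduct_sumElim]
  simp [Sum.elim_comp_inl_inr]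

lemma psd_blocks {M : Matrix m m ℂ} {N : Matrix k k ℂ} (hM : M.PosSemidef) (hN : N.PosSemidef) :
    (fromBlocks M 0 0 N).PosSemidef := by
  refine posSemidef_iff_dotProduct_mulVec.mpr ⟨?_, fun x => ?_⟩
  · rw [isHermitian_fromBlocks_iff]
    exact ⟨hM.1, by simp, by simp, hN.1⟩
  · rw [blocks_quad]
    exact add_nonneg (hM.dotProduct_mulVec_nonneg _) (hN.dotProduct_mulVec_nonneg _)

lemma pd_blocks {M : Matrix m m ℂ} {N : Matrix k k ℂ} (hM : M.PosDef) (hN : N.PosDef) :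
    (fromBlocks M 0 0 N).PosDef := by
  refine posDef_iff_dotProduct_mulVec.mpr ⟨?_, fun x hx => ?_⟩
  · rw [isHermitian_fromBlocks_iff]
    exact ⟨hM.1, by simp, by simp, hN.1⟩
  · rw [blocks_quad]
    have hsplit : x ∘ Sum.inl ≠ 0 ∨ x ∘ Sum.inr ≠ 0 := by
      by_contra hc
      push_neg at hc
      exact hx (by ext (i | i); exacts [congrFun hc.1 i, congrFun hc.2 i])
    rcases hsplit with h' | h'
    · exact add_pos_of_pos_of_nonneg (hM.dotProduct_mulVec_pos h') (hN.posSemidef.dotProduct_mulVec_nonneg _)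
    · exact add_pos_of_nonneg_of_pos (hM.posSemidef.dotProduct_mulVec_nonneg _) (hN.dotProduct_mulVec_pos h')

lemma pd_submatrix {M : Matrix m m ℂ} (hM : M.PosDef) (e : k ≃ m) :
    (M.submatrix e e).PosDef := by
  refine posDef_iff_dotProduct_mulVec.mpr ⟨hM.1.submatrix e, fun x hx => ?_⟩
  rw [submatrix_mulVec_equiv]
  have : star x ⬝ᵥ ((M *ᵥ (x ∘ e.symm)) ∘ e) =
      star (x ∘ e.symm) ⬝ᵥ (M *ᵥ (x ∘ e.symm)) := by
    rw [dotProduct, dotProduct, ← Equiv.sum_comp e (fun j => star (x ∘ e.symm) j * (M *ᵥ (x ∘ e.symm)) j)]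
    simp
  rw [this]
  refine hM.dotProduct_mulVec_pos (fun hc => hx ?_)
  ext i
  simpa using congrFun hc (e i)


lemma pd_smul {M : Matrix m m ℂ} (hM : M.PosDef) {r : ℝ}
    (hr : 0 < r) : ((r : ℂ) • M).PosDef := by
  refine posDef_iff_dotProduct_mulVec.mpr ⟨(psd_smul hM.posSemidef hr.le).1, fun x hx => ?_⟩
  rw [smul_mulVec, dotProduct_smul]
  have h0 : (0:ℂ) < (r:ℂ) := by exact_mod_cast hr
  exact mul_pos h0 (hM.dotProduct_mulVec_pos hx)


end Helpers


lemma matFunCalc_of_hermitian {m : ℕ} (h : ℝ → ℝ) {A : Matrix (Fin m) (Fin m) ℂ}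
    (hA : A.IsHermitian) :
    matFunCalc h A = (hA.eigenvectorUnitary : Matrix (Fin m) (Fin m) ℂ) *
      diagonal (fun i => (h (hA.eigenvalues i) : ℂ)) *
      (hA.eigenvectorUnitary : Matrix (Fin m) (Fin m) ℂ)ᴴ := by
  rw [matFunCalc, dif_pos hA, star_eq_conjTranspose]

lemma matFunCalc_spec {m : ℕ} (h : ℝ → ℝ) (A V : Matrix (Fin m) (Fin m) ℂ)
    (d : Fin m → ℝ) (hV : V * Vᴴ = 1) (hV' : Vᴴ * V = 1)
    (hAVd : A = V * diagonal (fun i => (d i : ℂ)) * Vᴴ) :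
    matFunCalc h A = V * diagonal (fun i => (h (d i) : ℂ)) * Vᴴ := by
  have hdstar : ∀ (f : Fin m → ℝ), (diagonal (fun i => ((f i : ℂ))))ᴴ
      = diagonal (fun i => ((f i : ℂ))) := by
    intro f
    rw [diagonal_conjTranspose]
    congr 1
    ext i
    simp [Pi.star_def, Complex.star_def, Complex.conj_ofReal]
  have hA : A.IsHermitian := by
    show Aᴴ = A
    rw [hAVd]
    simp only [conjTranspose_mul, conjTranspose_conjTranspose, hdstar, Matrix.mul_assoc]
  set U := (hA.eigenvectorUnitary : Matrix (Fin m) (Fin m) ℂ) with hUdef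
  have hU1 : U * Uᴴ = 1 := by
    rw [← star_eq_conjTranspose]
    exact (Matrix.mem_unitaryGroup_iff).mp hA.eigenvectorUnitary.2
  have hU2 : Uᴴ * U = 1 := by
    rw [← star_eq_conjTranspose]
    exact (Matrix.mem_unitaryGroup_iff').mp hA.eigenvectorUnitary.2
  have hspec : A = U * diagonal (fun i => ((hA.eigenvalues i : ℂ))) * Uᴴ := by
    rw [← star_eq_conjTranspose]
    exact hA.spectral_theorem
  set W := Uᴴ * V with hW
  have key : diagonal (fun i => ((hA.eigenvalues i : ℂ))) * W
      = W * diagonal (fun i => (d i : ℂ)) := by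
    have h1 : Uᴴ * A = diagonal (fun i => ((hA.eigenvalues i : ℂ))) * Uᴴ := by
      conv_lhs => rw [hspec]
      rw [← Matrix.mul_assoc, ← Matrix.mul_assoc, hU2, Matrix.one_mul]
    have h2 : A * V = V * diagonal (fun i => (d i : ℂ)) := by
      conv_lhs => rw [hAVd]
      rw [Matrix.mul_assoc, hV', Matrix.mul_one]
    calc diagonal (fun i => ((hA.eigenvalues i : ℂ))) * W
        = (diagonal (fun i => ((hA.eigenvalues i : ℂ))) * Uᴴ) * V := by
          rw [hW, Matrix.mul_assoc]
      _ = Uᴴ * (A * V) := by rw [← h1, Matrix.mul_assoc]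
      _ = (Uᴴ * V) * diagonal (fun i => (d i : ℂ)) := by rw [h2, Matrix.mul_assoc]
  have key2 : diagonal (fun i => ((h (hA.eigenvalues i) : ℂ))) * W
      = W * diagonal (fun i => ((h (d i)) : ℂ)) := by
    ext i j
    rw [diagonal_mul, mul_diagonal]
    rcases eq_or_ne (W i j) 0 with h0 | h0
    · rw [h0, mul_zero, zero_mul]
    · have hentry : (hA.eigenvalues i : ℂ) * W i j = W i j * (d j : ℂ) := by
        have := congrFun (congrFun key i) j
        rwa [diagonal_mul, mul_diagonal] at this
      have heq : hA.eigenvalues i = d j := by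
        rw [mul_comm (W i j)] at hentry
        exact_mod_cast mul_right_cancel₀ h0 hentry
      rw [heq, mul_comm]
  calc matFunCalc h A
      = U * diagonal (fun i => ((h (hA.eigenvalues i) : ℂ))) * Uᴴ := matFunCalc_of_hermitian h hA
    _ = U * diagonal (fun i => ((h (hA.eigenvalues i) : ℂ))) * Uᴴ * (V * Vᴴ) := by
        rw [hV, Matrix.mul_one]
    _ = U * (diagonal (fun i => ((h (hA.eigenvalues i) : ℂ))) * W) * Vᴴ := by
        simp only [Matrix.mul_assoc, hW]
    _ = U * (W * diagonal (fun i => ((h (d i)) : ℂ))) * Vᴴ := by rw [key2]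
    _ = (U * Uᴴ) * V * diagonal (fun i => ((h (d i)) : ℂ)) * Vᴴ := by
        simp only [Matrix.mul_assoc, hW]
    _ = V * diagonal (fun i => ((h (d i)) : ℂ)) * Vᴴ := by rw [hU1, Matrix.one_mul]

lemma matFunCalc_psd {m : ℕ} {h : ℝ → ℝ} (hpos : ∀ x : ℝ, 0 < x → 0 < h x)
    {A : Matrix (Fin m) (Fin m) ℂ} (hA : A.PosDef) : (matFunCalc h A).PosSemidef := by
  rw [matFunCalc_of_hermitian h hA.1]
  have hd : (diagonal (fun i => ((h (hA.1.eigenvalues i)) : ℂ))).PosSemidef := by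
    rw [posSemidef_diagonal_iff]
    intro i
    have := (hpos _ (hA.eigenvalues_pos i)).le
    exact_mod_cast this
  exact hd.mul_mul_conjTranspose_same _

lemma matFunCalc_herm {m : ℕ} (h : ℝ → ℝ) {A : Matrix (Fin m) (Fin m) ℂ}
    (hA : A.IsHermitian) : (matFunCalc h A).IsHermitian := by
  rw [matFunCalc_of_hermitian h hA]
  show _ᴴ = _
  simp only [conjTranspose_mul, conjTranspose_conjTranspose, diagonal_conjTranspose,
    Matrix.mul_assoc]
  congr 2
  ext i
  simp [Pi.star_def, Complex.star_def, Complex.conj_ofReal]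


lemma submatrix_sub'' {α : Type*} [Sub α] {m k l o : Type*} (A B : Matrix m k α)
    (r : l → m) (c : o → k) :
    A.submatrix r c - B.submatrix r c = (A - B).submatrix r c := rfl

lemma fromBlocks_sub' {m k : Type*} (A A' : Matrix m m ℂ) (B B' : Matrix m k ℂ)
    (C C' : Matrix k m ℂ) (D D' : Matrix k k ℂ) :
    fromBlocks A B C D - fromBlocks A' B' C' D' =
      fromBlocks (A - A') (B - B') (C - C') (D - D') := by
  ext (i | i) (j | j) <;> simp [fromBlocks]



set_option maxHeartbeats 2000000 in
/-- inclusions `C_{3n} ⊆ Γ_n ⊆ P'_n`: (1) an exact interpolation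
function for matrices of order `3n` is matrix concave of order `n`; (2) a matrix
concave function of order `n` is matrix monotone of order `n`. -/
theorem interpolation_concave_monotone (n : ℕ) (hn : 0 < n)
    (h : ℝ → ℝ) (hpos : ∀ x : ℝ, 0 < x → 0 < h x) :
    ((∀ A : Matrix (Fin (3 * n)) (Fin (3 * n)) ℂ, A.PosDef →
        ∀ T : Matrix (Fin (3 * n)) (Fin (3 * n)) ℂ,
          LoewnerLE (Tᴴ * T) 1 → LoewnerLE (Tᴴ * A * T) A →
          LoewnerLE (Tᴴ * matFunCalc h A * T) (matFunCalc h A)) →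
      ∀ l : ℝ, l ∈ Set.Icc (0 : ℝ) 1 →
        ∀ A₁ A₂ : Matrix (Fin n) (Fin n) ℂ, A₁.PosDef → A₂.PosDef →
          LoewnerLE (l • matFunCalc h A₁ + (1 - l) • matFunCalc h A₂)
            (matFunCalc h (l • A₁ + (1 - l) • A₂))) ∧
    ((∀ l : ℝ, l ∈ Set.Icc (0 : ℝ) 1 →
        ∀ A₁ A₂ : Matrix (Fin n) (Fin n) ℂ, A₁.PosDef → A₂.PosDef →
          LoewnerLE (l • matFunCalc h A₁ + (1 - l) • matFunCalc h A₂)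
            (matFunCalc h (l • A₁ + (1 - l) • A₂))) →
      ∀ A₁ A₂ : Matrix (Fin n) (Fin n) ℂ, A₁.PosDef → A₂.PosDef →
        LoewnerLE A₁ A₂ → LoewnerLE (matFunCalc h A₁) (matFunCalc h A₂)) := by
  constructor
  · -- Part 1: interpolation implies matrix concavity
    intro hC l hl A₁ A₂ h1 h2
    have he : n + (n + n) = 3 * n := by ring
    set e : (Fin n ⊕ (Fin n ⊕ Fin n)) ≃ Fin (3 * n) :=
      ((Equiv.sumCongr (Equiv.refl (Fin n)) finSumFinEquiv).trans finSumFinEquiv).trans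
        (finCongr he) with hedef
    set B : Matrix (Fin n) (Fin n) ℂ := l • A₁ + (1 - l) • A₂ with hBdef
    have hB : B.PosDef := by
      rcases eq_or_lt_of_le hl.1 with h0 | h0
      · have hBA : B = A₂ := by rw [hBdef, ← h0]; simp
        rw [hBA]; exact h2
      · rw [hBdef, rsmul, rsmul]
        exact (pd_smul h1 h0).add_posSemidef (psd_smul h2.posSemidef (by linarith [hl.2]))
    -- spectral data
    set uB : Matrix (Fin n) (Fin n) ℂ := (hB.1.eigenvectorUnitary : Matrix (Fin n) (Fin n) ℂ)
    set u1 : Matrix (Fin n) (Fin n) ℂ := (h1.1.eigenvectorUnitary : Matrix (Fin n) (Fin n) ℂ)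
    set u2 : Matrix (Fin n) (Fin n) ℂ := (h2.1.eigenvectorUnitary : Matrix (Fin n) (Fin n) ℂ)
    have huB1 : uB * uBᴴ = 1 := by
      rw [← star_eq_conjTranspose]; exact (Matrix.mem_unitaryGroup_iff).mp hB.1.eigenvectorUnitary.2
    have huB2 : uBᴴ * uB = 1 := by
      rw [← star_eq_conjTranspose]; exact (Matrix.mem_unitaryGroup_iff').mp hB.1.eigenvectorUnitary.2
    have hu11 : u1 * u1ᴴ = 1 := by
      rw [← star_eq_conjTranspose]; exact (Matrix.mem_unitaryGroup_iff).mp h1.1.eigenvectorUnitary.2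
    have hu12 : u1ᴴ * u1 = 1 := by
      rw [← star_eq_conjTranspose]; exact (Matrix.mem_unitaryGroup_iff').mp h1.1.eigenvectorUnitary.2
    have hu21 : u2 * u2ᴴ = 1 := by
      rw [← star_eq_conjTranspose]; exact (Matrix.mem_unitaryGroup_iff).mp h2.1.eigenvectorUnitary.2
    have hu22 : u2ᴴ * u2 = 1 := by
      rw [← star_eq_conjTranspose]; exact (Matrix.mem_unitaryGroup_iff').mp h2.1.eigenvectorUnitary.2
    have hspecB : B = uB * diagonal (fun i => ((hB.1.eigenvalues i : ℂ))) * uBᴴ := by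
      rw [← star_eq_conjTranspose]; exact hB.1.spectral_theorem
    have hspec1 : A₁ = u1 * diagonal (fun i => ((h1.1.eigenvalues i : ℂ))) * u1ᴴ := by
      rw [← star_eq_conjTranspose]; exact h1.1.spectral_theorem
    have hspec2 : A₂ = u2 * diagonal (fun i => ((h2.1.eigenvalues i : ℂ))) * u2ᴴ := by
      rw [← star_eq_conjTranspose]; exact h2.1.spectral_theorem
    -- S-land matrices
    set D2 : Matrix (Fin n ⊕ Fin n) (Fin n ⊕ Fin n) ℂ := fromBlocks A₁ 0 0 A₂ with hD2def
    set MS : Matrix (Fin n ⊕ (Fin n ⊕ Fin n)) (Fin n ⊕ (Fin n ⊕ Fin n)) ℂ :=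
      fromBlocks B 0 0 D2 with hMSdef
    set VS : Matrix (Fin n ⊕ (Fin n ⊕ Fin n)) (Fin n ⊕ (Fin n ⊕ Fin n)) ℂ :=
      fromBlocks uB 0 0 (fromBlocks u1 0 0 u2) with hVSdef
    set dS : (Fin n ⊕ (Fin n ⊕ Fin n)) → ℝ :=
      Sum.elim hB.1.eigenvalues (Sum.elim h1.1.eigenvalues h2.1.eigenvalues) with hdSdef
    -- rho facts
    have hρmul : ∀ (M N : Matrix (Fin n ⊕ (Fin n ⊕ Fin n)) (Fin n ⊕ (Fin n ⊕ Fin n)) ℂ),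
        (M * N).submatrix e.symm e.symm = M.submatrix e.symm e.symm * N.submatrix e.symm e.symm :=
      fun M N => (submatrix_mul_equiv M N e.symm e.symm e.symm).symm
    have hρone : (1 : Matrix (Fin n ⊕ (Fin n ⊕ Fin n)) (Fin n ⊕ (Fin n ⊕ Fin n)) ℂ).submatrix
        e.symm e.symm = 1 := submatrix_one_equiv e.symm
    -- unitarity of VS
    have hVS1 : VS * VSᴴ = 1 := by
      rw [hVSdef]
      simp [fromBlocks_conjTranspose, fromBlocks_multiply, huB1, hu11, hu21, fromBlocks_one]
    have hVS2 : VSᴴ * VS = 1 := by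
      rw [hVSdef]
      simp [fromBlocks_conjTranspose, fromBlocks_multiply, huB2, hu12, hu22, fromBlocks_one]
    -- diagonal split
    have hdiagS : ∀ f : ℝ → ℝ, diagonal (fun i => ((f (dS i)) : ℂ)) =
        fromBlocks (diagonal fun i => ((f (hB.1.eigenvalues i)) : ℂ)) 0 0
          (fromBlocks (diagonal fun i => ((f (h1.1.eigenvalues i)) : ℂ)) 0 0
            (diagonal fun i => ((f (h2.1.eigenvalues i)) : ℂ))) := by
      intro f
      have hfun : (fun i => ((f (dS i)) : ℂ)) =
          Sum.elim (fun i => ((f (hB.1.eigenvalues i)) : ℂ))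
            (Sum.elim (fun i => ((f (h1.1.eigenvalues i)) : ℂ))
              (fun i => ((f (h2.1.eigenvalues i)) : ℂ))) := by
        funext i
        rcases i with i | i | i <;> rfl
      rw [hfun, ← fromBlocks_diagonal, ← fromBlocks_diagonal]
    have hMSspec : MS = VS * diagonal (fun i => ((dS i) : ℂ)) * VSᴴ := by
      have hid := hdiagS id
      simp only [id] at hid
      rw [hid, hVSdef, hMSdef, hD2def, fromBlocks_conjTranspose, fromBlocks_conjTranspose]
      simp only [fromBlocks_multiply, Matrix.mul_zero, Matrix.zero_mul, add_zero, zero_add,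
        conjTranspose_zero]
      rw [← hspecB, ← hspec1, ← hspec2]
    have hdsub : ∀ (g : (Fin n ⊕ (Fin n ⊕ Fin n)) → ℝ),
        (diagonal (fun i => ((g i) : ℂ))).submatrix e.symm e.symm
          = diagonal (fun i => ((g (e.symm i)) : ℂ)) := by
      intro g
      rw [submatrix_diagonal_equiv]
      rfl
    -- big spectral decomposition
    have hbig : MS.submatrix e.symm e.symm = (VS.submatrix e.symm e.symm) *
        diagonal (fun i => ((dS (e.symm i)) : ℂ)) * (VS.submatrix e.symm e.symm)ᴴ := by
      rw [conjTranspose_submatrix, ← hdsub, ← hρmul, ← hρmul, ← hMSspec]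
    have hρV1 : (VS.submatrix e.symm e.symm) * (VS.submatrix e.symm e.symm)ᴴ = 1 := by
      rw [conjTranspose_submatrix, ← hρmul, hVS1, hρone]
    have hρV2 : (VS.submatrix e.symm e.symm)ᴴ * (VS.submatrix e.symm e.symm) = 1 := by
      rw [conjTranspose_submatrix, ← hρmul, hVS2, hρone]
    have hFC : matFunCalc h (MS.submatrix e.symm e.symm) =
        (VS.submatrix e.symm e.symm) * diagonal (fun i => ((h (dS (e.symm i))) : ℂ)) *
          (VS.submatrix e.symm e.symm)ᴴ :=
      matFunCalc_spec h _ _ (fun i => dS (e.symm i)) hρV1 hρV2 hbig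
    set HS : Matrix (Fin n ⊕ (Fin n ⊕ Fin n)) (Fin n ⊕ (Fin n ⊕ Fin n)) ℂ :=
      fromBlocks (matFunCalc h B) 0 0
        (fromBlocks (matFunCalc h A₁) 0 0 (matFunCalc h A₂)) with hHSdef
    have hHSspec : HS = VS * diagonal (fun i => ((h (dS i)) : ℂ)) * VSᴴ := by
      rw [hdiagS h, hVSdef, hHSdef, fromBlocks_conjTranspose, fromBlocks_conjTranspose]
      simp only [fromBlocks_multiply, Matrix.mul_zero, Matrix.zero_mul, add_zero, zero_add,
        conjTranspose_zero]
      rw [← matFunCalc_of_hermitian h hB.1, ← matFunCalc_of_hermitian h h1.1,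
        ← matFunCalc_of_hermitian h h2.1]
    have hFC2 : matFunCalc h (MS.submatrix e.symm e.symm) = HS.submatrix e.symm e.symm := by
      rw [hFC, hHSspec, hρmul, hρmul, conjTranspose_submatrix, hdsub]
    -- the contraction T
    set C : Matrix (Fin n ⊕ Fin n) (Fin n) ℂ :=
      fromRows (((Real.sqrt l : ℝ) : ℂ) • 1) (((Real.sqrt (1 - l) : ℝ) : ℂ) • 1) with hCdef
    set TS : Matrix (Fin n ⊕ (Fin n ⊕ Fin n)) (Fin n ⊕ (Fin n ⊕ Fin n)) ℂ :=
      fromBlocks 0 0 C 0 with hTSdef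
    have hCct : Cᴴ = fromCols (((Real.sqrt l : ℝ) : ℂ) • 1)
        (((Real.sqrt (1 - l) : ℝ) : ℂ) • 1) := by
      rw [hCdef, conjTranspose_fromRows_eq_fromCols_conjTranspose]
      congr 1 <;> simp [conjTranspose_smul, Complex.star_def, Complex.conj_ofReal]
    have hsq1 : ((Real.sqrt l : ℝ) : ℂ) * ((Real.sqrt l : ℝ) : ℂ) = ((l : ℝ) : ℂ) := by
      rw [← Complex.ofReal_mul, Real.mul_self_sqrt hl.1]
    have hsq2 : ((Real.sqrt (1 - l) : ℝ) : ℂ) * ((Real.sqrt (1 - l) : ℝ) : ℂ)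
        = (((1 - l) : ℝ) : ℂ) := by
      rw [← Complex.ofReal_mul, Real.mul_self_sqrt (by linarith [hl.2])]
    have compress : ∀ (Z X Y : Matrix (Fin n) (Fin n) ℂ),
        TSᴴ * (fromBlocks Z 0 0 (fromBlocks X 0 0 Y)) * TS =
          fromBlocks (((l : ℝ) : ℂ) • X + (((1 - l) : ℝ) : ℂ) • Y) 0 0 0 := by
      intro Z X Y
      rw [hTSdef, fromBlocks_conjTranspose]
      simp only [conjTranspose_zero, fromBlocks_multiply, Matrix.mul_zero, Matrix.zero_mul,
        add_zero, zero_add]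
      congr 1
      rw [Matrix.mul_assoc, hCct, hCdef, fromBlocks_mul_fromRows, fromCols_mul_fromRows]
      simp only [Matrix.mul_zero, Matrix.zero_mul, add_zero, zero_add, Matrix.smul_mul,
        Matrix.mul_smul, Matrix.one_mul, Matrix.mul_one, smul_smul, smul_zero,
        add_zero, zero_add, hsq1, hsq2]
    have hTT : TSᴴ * TS = fromBlocks 1 0 0 0 := by
      rw [hTSdef, fromBlocks_conjTranspose]
      simp only [conjTranspose_zero, fromBlocks_multiply, Matrix.mul_zero, Matrix.zero_mul,
        add_zero, zero_add]
      congr 1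
      rw [hCct, hCdef, fromCols_mul_fromRows]
      simp only [Matrix.smul_mul, Matrix.mul_smul, Matrix.one_mul, Matrix.mul_one,
        smul_smul, hsq1, hsq2]
      rw [← add_smul]
      norm_num
    -- the hypotheses of hC
    have hApd : (MS.submatrix e.symm e.symm).PosDef :=
      pd_submatrix (pd_blocks hB (pd_blocks h1 h2)) e.symm
    have hBc : B = ((l : ℝ) : ℂ) • A₁ + (((1 - l) : ℝ) : ℂ) • A₂ := by
      rw [hBdef, rsmul, rsmul]
    have cond1 : LoewnerLE ((TS.submatrix e.symm e.symm)ᴴ * TS.submatrix e.symm e.symm) 1 := by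
      show Matrix.PosSemidef _
      rw [conjTranspose_submatrix, ← hρmul, ← hρone, submatrix_sub'']
      have h1T : (1 : Matrix (Fin n ⊕ (Fin n ⊕ Fin n)) (Fin n ⊕ (Fin n ⊕ Fin n)) ℂ) - TSᴴ * TS
          = fromBlocks 0 0 0 1 := by
        rw [hTT]
        nth_rewrite 1 [← fromBlocks_one]
        rw [fromBlocks_sub']
        simp
      rw [h1T]
      exact (posSemidef_submatrix_equiv e.symm).mpr
        (psd_blocks Matrix.PosSemidef.zero Matrix.PosSemidef.one)
    have cond2 : LoewnerLE ((TS.submatrix e.symm e.symm)ᴴ * MS.submatrix e.symm e.symm *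
        TS.submatrix e.symm e.symm) (MS.submatrix e.symm e.symm) := by
      show Matrix.PosSemidef _
      rw [conjTranspose_submatrix, ← hρmul, ← hρmul, submatrix_sub'']
      have hMT : MS - TSᴴ * MS * TS = fromBlocks 0 0 0 D2 := by
        rw [hMSdef, hD2def, compress B A₁ A₂, fromBlocks_sub']
        rw [← hBc]
        simp
      rw [hMT]
      exact (posSemidef_submatrix_equiv e.symm).mpr
        (psd_blocks Matrix.PosSemidef.zero (psd_blocks h1.posSemidef h2.posSemidef))
    have hres := hC (MS.submatrix e.symm e.symm) hApd (TS.submatrix e.symm e.symm) cond1 cond2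
    rw [hFC2] at hres
    unfold LoewnerLE at hres ⊢
    rw [conjTranspose_submatrix, ← hρmul, ← hρmul, submatrix_sub''] at hres
    have hHT : HS - TSᴴ * HS * TS =
        fromBlocks (matFunCalc h B - (((l : ℝ) : ℂ) • matFunCalc h A₁ +
            (((1 - l) : ℝ) : ℂ) • matFunCalc h A₂)) 0 0
          (fromBlocks (matFunCalc h A₁) 0 0 (matFunCalc h A₂)) := by
      rw [hHSdef, compress (matFunCalc h B) (matFunCalc h A₁) (matFunCalc h A₂), fromBlocks_sub']
      simp
    rw [hHT] at hres
    rw [posSemidef_submatrix_equiv] at hres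
    have hfinal := hres.submatrix Sum.inl
    have hsub : (fromBlocks (matFunCalc h B - (((l : ℝ) : ℂ) • matFunCalc h A₁ +
        (((1 - l) : ℝ) : ℂ) • matFunCalc h A₂)) 0 0
          (fromBlocks (matFunCalc h A₁) 0 0 (matFunCalc h A₂))).submatrix
            (Sum.inl : Fin n → Fin n ⊕ (Fin n ⊕ Fin n)) Sum.inl
        = matFunCalc h B - (((l : ℝ) : ℂ) • matFunCalc h A₁ +
            (((1 - l) : ℝ) : ℂ) • matFunCalc h A₂) := by
      ext i j
      rfl
    rw [hsub] at hfinal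
    rw [rsmul, rsmul]
    exact hfinal
  · -- Part 2: matrix concavity implies matrix monotonicity
    intro hc A₁ A₂ h1 h2 hle
    set M₁ := matFunCalc h A₁ with hM₁
    set M₂ := matFunCalc h A₂ with hM₂
    have herm : (M₂ - M₁).IsHermitian := (matFunCalc_herm h h2.1).sub (matFunCalc_herm h h1.1)
    have main : ∀ l ∈ Set.Ioo (0:ℝ) 1, (M₂ - (l:ℂ) • M₁).PosSemidef := by
      intro l hl
      have hl1 : (0:ℝ) < 1 - l := by linarith [hl.2]
      set C := (1-l)⁻¹ • (A₂ - l • A₁) with hCdef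
      have hC : C.PosDef := by
        have hrw : A₂ - l • A₁ = (A₂ - A₁) + (1-l) • A₁ := by
          rw [sub_smul, one_smul]; abel
        have hsum : (A₂ - l • A₁).PosDef := by
          rw [hrw, rsmul]
          exact Matrix.PosDef.posSemidef_add hle (pd_smul h1 hl1)
        rw [hCdef, rsmul]
        exact pd_smul hsum (by positivity)
      have hcomb : l • A₁ + (1-l) • C = A₂ := by
        rw [hCdef, smul_inv_smul₀ (by linarith : (1:ℝ)-l ≠ 0)]
        abel
      have hkey := hc l ⟨hl.1.le, hl.2.le⟩ A₁ C h1 hC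
      rw [hcomb] at hkey
      have hY : (((1-l:ℝ):ℂ) • matFunCalc h C).PosSemidef :=
        psd_smul (matFunCalc_psd hpos hC) hl1.le
      have : M₂ - (l:ℂ) • M₁ =
          (M₂ - (l • M₁ + (1-l) • matFunCalc h C)) + ((1-l:ℝ):ℂ) • matFunCalc h C := by
        rw [rsmul l M₁, rsmul (1-l) (matFunCalc h C)]
        abel
      rw [this]
      exact hkey.add hY
    refine posSemidef_iff_dotProduct_mulVec.mpr ⟨herm, fun x => ?_⟩
    have hq : ∀ l ∈ Set.Ioo (0:ℝ) 1,
        (0:ℂ) ≤ star x ⬝ᵥ M₂ *ᵥ x - (l:ℂ) * (star x ⬝ᵥ M₁ *ᵥ x) := by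
      intro l hl
      have := (main l hl).dotProduct_mulVec_nonneg x
      rwa [sub_mulVec, dotProduct_sub, smul_mulVec, dotProduct_smul, smul_eq_mul] at this
    set q1 := star x ⬝ᵥ M₁ *ᵥ x with hq1def
    set q2 := star x ⬝ᵥ M₂ *ᵥ x with hq2def
    have hq1 : (0:ℂ) ≤ q1 := (matFunCalc_psd hpos h1).dotProduct_mulVec_nonneg x
    have him : q1.im = 0 ∧ q2.im = 0 := by
      have e2 := hq (1/2) (by norm_num)
      have e3 := hq (1/3) (by norm_num)
      rw [Complex.le_def] at e2 e3
      simp only [Complex.sub_im, Complex.mul_im, Complex.ofReal_re, Complex.ofReal_im,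
        Complex.zero_im, Complex.zero_re] at e2 e3
      constructor <;> [skip; skip] <;> nlinarith [e2.2, e3.2]
    have hre : q1.re ≤ q2.re := by
      by_contra hlt
      push_neg at hlt
      have hq1re : 0 ≤ q1.re := by
        rw [Complex.le_def] at hq1; simpa using hq1.1
      have hgen : ∀ l ∈ Set.Ioo (0:ℝ) 1, l * q1.re ≤ q2.re := by
        intro l hl
        have := hq l hl
        rw [Complex.le_def] at this
        have := this.1
        simp only [Complex.sub_re, Complex.mul_re, Complex.ofReal_re, Complex.ofReal_im,
          Complex.zero_re] at this
        nlinarith [him.1]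
      have hp : 0 < q1.re := by
        rcases lt_or_eq_of_le hq1re with hp | hp
        · exact hp
        · exfalso
          have := hgen (1/2) (by norm_num)
          nlinarith
      have hr0 : 0 ≤ q2.re := by
        have := hgen (1/2) (by norm_num)
        nlinarith
      set l₀ := (q2.re / q1.re + 1)/2 with hl₀
      have hl₀mem : l₀ ∈ Set.Ioo (0:ℝ) 1 := by
        constructor
        · have : 0 ≤ q2.re / q1.re := div_nonneg hr0 hp.le
          simp only [hl₀]; linarith
        · have : q2.re / q1.re < 1 := (div_lt_one hp).mpr hlt
          simp only [hl₀]; linarith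
      have := hgen l₀ hl₀mem
      rw [hl₀] at this
      have hcal : (q2.re / q1.re + 1) / 2 * q1.re = (q2.re + q1.re)/2 := by
        field_simp
      rw [hcal] at this
      linarith
    rw [sub_mulVec, dotProduct_sub]
    rw [Complex.le_def]
    constructor
    · simpa using hre
    · show (0:ℂ).im = (q2 - q1).im
      simp [Complex.sub_im, him.1, him.2]
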